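/- arXiv:2605.23849 — 2 statements merged into one kernel-verified Lean document; each statement's English description precedes it below -/
import Mathlib

section
/- Let n ≥ 5. (a) For every derangement σ of {1,…,n} whose disjoint cycle decomposition has t(σ) ≥ 2 cycles, there exists a derangement σ̄ with exactly t(σ) − 1 cycles such that φ(σ)·φ(σ̄)^{−1} ∈ C_n. (b) For any two derangements σ₁, σ₂ of {1,…,n}, φ(σ₁)·φ(σ₂)^{−1} ∈ C_n, i.e., the images of all derangements under φ lie in a single coset of C_n in G_n. -/
attribute [local instance] Classical.propDecidable

/-- `G_n` is realized additively as the group of `ℤ`-valued functions on unordered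
pairs from `{1,…,n}`; `pgen n i j` is the generator `p_{i,j} = p_{j,i}`. -/
noncomputable def pgen (n : ℕ) (i j : Fin n) : Sym2 (Fin n) → ℤ :=
  Pi.single s(i, j) 1

/-- `φ(σ) = ∏_i p_{i,σ(i)}` (written additively). -/
noncomputable def phi (n : ℕ) (σ : Equiv.Perm (Fin n)) : Sym2 (Fin n) → ℤ :=
  ∑ i : Fin n, pgen n i (σ i)

/-- The subgroup `C_n ≤ G_n` generated by the elements
`c_{i,j,k} = p_{i,j}·p_{j,k}·p_{i,k}` for pairwise distinct `i,j,k`. -/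
noncomputable def Cgrp (n : ℕ) : AddSubgroup (Sym2 (Fin n) → ℤ) :=
  AddSubgroup.closure {x | ∃ i j k : Fin n, i ≠ j ∧ j ≠ k ∧ i ≠ k ∧
    x = pgen n i j + pgen n j k + pgen n i k}

lemma pgen_comm (n : ℕ) (i j : Fin n) : pgen n i j = pgen n j i := by
  unfold pgen
  rw [Sym2.eq_swap]

lemma gen_mem (n : ℕ) {i j k : Fin n} (h1 : i ≠ j) (h2 : j ≠ k) (h3 : i ≠ k) :
    pgen n i j + pgen n j k + pgen n i k ∈ Cgrp n :=
  AddSubgroup.subset_closure ⟨i, j, k, h1, h2, h3, rfl⟩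

lemma quad_mem (n : ℕ) (hn : 5 ≤ n) {a b c d : Fin n}
    (hab : a ≠ b) (hac : a ≠ c) (had : a ≠ d) (hbc : b ≠ c) (hbd : b ≠ d)
    (hcd : c ≠ d) :
    pgen n a c + pgen n b d - pgen n a d - pgen n b c ∈ Cgrp n := by
  obtain ⟨e, hea, heb, hec, hed⟩ : ∃ e : Fin n, e ≠ a ∧ e ≠ b ∧ e ≠ c ∧ e ≠ d := by
    by_contra h
    push_neg at h
    have hsub : (Finset.univ : Finset (Fin n)) ⊆ {a, b, c, d} := by
      intro x _
      by_cases hxa : x = a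
      · simp [hxa]
      by_cases hxb : x = b
      · simp [hxb]
      by_cases hxc : x = c
      · simp [hxc]
      have := h x hxa hxb hxc
      simp [this]
    have h1 : (Finset.univ : Finset (Fin n)).card ≤ ({a, b, c, d} : Finset (Fin n)).card :=
      Finset.card_le_card hsub
    have h2 : ({a, b, c, d} : Finset (Fin n)).card ≤ 4 := by
      have c1 := Finset.card_insert_le a ({b, c, d} : Finset (Fin n))
      have c2 := Finset.card_insert_le b ({c, d} : Finset (Fin n))
      have c3 := Finset.card_insert_le c ({d} : Finset (Fin n))
      have c4 : ({d} : Finset (Fin n)).card = 1 := Finset.card_singleton d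
      omega
    rw [Finset.card_univ, Fintype.card_fin] at h1
    omega
  have key : pgen n a c + pgen n b d - pgen n a d - pgen n b c =
      (pgen n a c + pgen n c e + pgen n a e) + (pgen n b d + pgen n d e + pgen n b e)
      - (pgen n a d + pgen n d e + pgen n a e)
      - (pgen n b c + pgen n c e + pgen n b e) := by abel
  rw [key]
  exact sub_mem (sub_mem (add_mem (gen_mem n hac hec.symm hea.symm)
      (gen_mem n hbd hed.symm heb.symm))
      (gen_mem n had hed.symm hea.symm))
      (gen_mem n hbc hec.symm heb.symm)

lemma phi_diff (n : ℕ) (σ₁ σ₂ : Equiv.Perm (Fin n)) (s : Finset (Fin n))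
    (h : ∀ i ∉ s, σ₁ i = σ₂ i) :
    phi n σ₁ - phi n σ₂ = ∑ i ∈ s, (pgen n i (σ₁ i) - pgen n i (σ₂ i)) := by
  unfold phi
  rw [← Finset.sum_sub_distrib]
  exact (Finset.sum_subset (Finset.subset_univ s)
    (fun x _ hx => by rw [h x hx, sub_self])).symm

lemma coset_aux (n : ℕ) (hn : 5 ≤ n) :
    ∀ m : ℕ, ∀ σ₁ σ₂ : Equiv.Perm (Fin n), (∀ i, σ₁ i ≠ i) → (∀ i, σ₂ i ≠ i) →
      (Finset.univ.filter fun i => σ₁ i ≠ σ₂ i).card ≤ m →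
      phi n σ₁ - phi n σ₂ ∈ Cgrp n := by
  intro m
  induction m with
  | zero =>
    intro σ₁ σ₂ h₁ h₂ hcard
    have heq : σ₁ = σ₂ := by
      apply Equiv.ext
      intro i
      by_contra hne
      have hi : i ∈ Finset.univ.filter fun i => σ₁ i ≠ σ₂ i :=
        Finset.mem_filter.mpr ⟨Finset.mem_univ i, hne⟩
      have := Finset.card_pos.mpr ⟨i, hi⟩
      omega
    rw [heq, sub_self]
    exact zero_mem _
  | succ m ih =>
    intro σ₁ σ₂ h₁ h₂ hcard
    by_cases hall : σ₁ = σ₂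
    · rw [hall, sub_self]; exact zero_mem _
    obtain ⟨a, ha⟩ : ∃ a, σ₁ a ≠ σ₂ a := by
      by_contra h
      push_neg at h
      exact hall (Equiv.ext h)
    set D := Finset.univ.filter fun i => σ₁ i ≠ σ₂ i with hD
    have haD : a ∈ D := Finset.mem_filter.mpr ⟨Finset.mem_univ a, ha⟩
    set b := σ₁⁻¹ (σ₂ a) with hbdef
    have hσ₁b : σ₁ b = σ₂ a := Equiv.apply_symm_apply σ₁ (σ₂ a)
    have hba : b ≠ a := by
      intro h
      rw [h] at hσ₁b
      exact ha hσ₁b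
    have hab : a ≠ b := hba.symm
    have hbD : b ∈ D := by
      refine Finset.mem_filter.mpr ⟨Finset.mem_univ b, ?_⟩
      intro h
      exact hab (σ₂.injective (hσ₁b.symm.trans h))
    have hDcard : (D.erase a).card ≤ m := by
      have := Finset.card_erase_of_mem haD
      omega
    by_cases hc1 : σ₁ a ≠ b
    · -- swap move
      set τ := σ₁ * Equiv.swap a b with hτdef
      have hτa : τ a = σ₁ b := by
        simp [hτdef, Equiv.swap_apply_left]
      have hτb : τ b = σ₁ a := by
        simp [hτdef, Equiv.swap_apply_right]
      have hτo : ∀ i, i ≠ a → i ≠ b → τ i = σ₁ i := by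
        intro i hia hib
        simp [hτdef, Equiv.swap_apply_of_ne_of_ne hia hib]
      have hτder : ∀ i, τ i ≠ i := by
        intro i
        by_cases hia : i = a
        · rw [hia, hτa, hσ₁b]; exact fun h => h₂ a h
        by_cases hib : i = b
        · rw [hib, hτb]; exact fun h => hc1 h
        · rw [hτo i hia hib]; exact h₁ i
      have hstep : phi n σ₁ - phi n τ ∈ Cgrp n := by
        rw [phi_diff n σ₁ τ {a, b} (fun i hi => by
          simp only [Finset.mem_insert, Finset.mem_singleton] at hi
          push_neg at hi
          exact (hτo i hi.1 hi.2).symm)]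
        rw [Finset.sum_pair hab, hτa, hτb]
        have hq := quad_mem n hn (a := a) (b := b) (c := σ₁ a) (d := σ₁ b)
          hab (fun h => h₁ a h.symm) (by rw [hσ₁b]; exact (h₂ a).symm)
          (fun h => hc1 h.symm) (fun h => h₁ b h.symm)
          (fun h => hab (σ₁.injective h))
        have : pgen n a (σ₁ a) - pgen n a (σ₁ b) + (pgen n b (σ₁ b) - pgen n b (σ₁ a)) =
            pgen n a (σ₁ a) + pgen n b (σ₁ b) - pgen n a (σ₁ b) - pgen n b (σ₁ a) := by
          abel
        rw [this]
        exact hq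
      have hsub : (Finset.univ.filter fun i => τ i ≠ σ₂ i) ⊆ D.erase a := by
        intro i hi
        have hi' : τ i ≠ σ₂ i := (Finset.mem_filter.mp hi).2
        have hia : i ≠ a := by
          intro h
          rw [h, hτa, hσ₁b] at hi'
          exact hi' rfl
        refine Finset.mem_erase.mpr ⟨hia, ?_⟩
        by_cases hib : i = b
        · rw [hib]; exact hbD
        · refine Finset.mem_filter.mpr ⟨Finset.mem_univ i, ?_⟩
          rw [← hτo i hia hib]
          exact hi'
      have hrec := ih τ σ₂ hτder h₂ (le_trans (Finset.card_le_card hsub) hDcard)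
      have : phi n σ₁ - phi n σ₂ = (phi n σ₁ - phi n τ) + (phi n τ - phi n σ₂) := by abel
      rw [this]
      exact add_mem hstep hrec
    · -- σ₁ a = b
      push_neg at hc1
      set u := σ₁ b with hudef
      have huσ₂a : u = σ₂ a := hσ₁b
      have hua : u ≠ a := by rw [huσ₂a]; exact h₂ a
      have hub : u ≠ b := by rw [hudef]; exact h₁ b
      by_cases hc : ∃ c, (σ₁ c ≠ σ₂ c) ∧ c ≠ a ∧ c ≠ b ∧ c ≠ u
      · obtain ⟨c, hcD, hca, hcb, hcu⟩ := hc
        set v := σ₁ c with hvdef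
        have hvb : v ≠ b := by
          intro h
          rw [← hc1] at h
          exact hca (σ₁.injective h)
        have hvc : v ≠ c := h₁ c
        have hvu : v ≠ u := fun h => hcb (σ₁.injective h)
        set τ := σ₁ * (Equiv.swap a b * Equiv.swap b c) with hτdef
        have hτa : τ a = u := by
          simp [hτdef, Equiv.Perm.mul_apply,
            Equiv.swap_apply_of_ne_of_ne hab hca.symm, Equiv.swap_apply_left, hudef]
        have hτb : τ b = v := by
          simp [hτdef, Equiv.Perm.mul_apply, Equiv.swap_apply_left,
            Equiv.swap_apply_of_ne_of_ne hca hcb, hvdef]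
        have hτc : τ c = b := by
          simp [hτdef, Equiv.Perm.mul_apply, Equiv.swap_apply_right, hc1]
        have hτo : ∀ i, i ≠ a → i ≠ b → i ≠ c → τ i = σ₁ i := by
          intro i hia hib hic
          simp [hτdef, Equiv.Perm.mul_apply,
            Equiv.swap_apply_of_ne_of_ne hib hic,
            Equiv.swap_apply_of_ne_of_ne hia hib]
        have hτder : ∀ i, τ i ≠ i := by
          intro i
          by_cases hia : i = a
          · rw [hia, hτa]; exact hua
          by_cases hib : i = b
          · rw [hib, hτb]; exact hvb
          by_cases hic : i = c
          · rw [hic, hτc]; exact fun h => hcb h.symm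
          · rw [hτo i hia hib hic]; exact h₁ i
        have hstep : phi n σ₁ - phi n τ ∈ Cgrp n := by
          rw [phi_diff n σ₁ τ {a, b, c} (fun i hi => by
            simp only [Finset.mem_insert, Finset.mem_singleton] at hi
            push_neg at hi
            exact (hτo i hi.1 hi.2.1 hi.2.2).symm)]
          have hnotmem : a ∉ ({b, c} : Finset (Fin n)) := by
            simp [hab, hca.symm]
          have hnotmem2 : b ∉ ({c} : Finset (Fin n)) := by
            simp [hcb.symm]
          rw [Finset.sum_insert hnotmem, Finset.sum_insert hnotmem2,
            Finset.sum_singleton, hτa, hτb, hτc, hc1, ← hudef, ← hvdef]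
          have hq1 := quad_mem n hn (a := a) (b := c) (c := b) (d := u)
            hca.symm hab hua.symm hcb hcu hub.symm
          have hq2 := quad_mem n hn (a := b) (b := c) (c := u) (d := v)
            hcb.symm hub.symm hvb.symm hcu hvc.symm hvu.symm
          have hsum :
              pgen n a b - pgen n a u + (pgen n b u - pgen n b v +
                (pgen n c v - pgen n c b)) =
              (pgen n a b + pgen n c u - pgen n a u - pgen n c b) +
                (pgen n b u + pgen n c v - pgen n b v - pgen n c u) := by abel
          rw [hsum]
          exact add_mem hq1 hq2
        have hsub : (Finset.univ.filter fun i => τ i ≠ σ₂ i) ⊆ D.erase a := by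
          intro i hi
          have hi' : τ i ≠ σ₂ i := (Finset.mem_filter.mp hi).2
          have hia : i ≠ a := by
            intro h
            rw [h, hτa, huσ₂a] at hi'
            exact hi' rfl
          refine Finset.mem_erase.mpr ⟨hia, ?_⟩
          by_cases hib : i = b
          · rw [hib]; exact hbD
          by_cases hic : i = c
          · rw [hic]; exact Finset.mem_filter.mpr ⟨Finset.mem_univ c, hcD⟩
          · refine Finset.mem_filter.mpr ⟨Finset.mem_univ i, ?_⟩
            rw [← hτo i hia hib hic]
            exact hi'
        have hrec := ih τ σ₂ hτder h₂ (le_trans (Finset.card_le_card hsub) hDcard)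
        have : phi n σ₁ - phi n σ₂ = (phi n σ₁ - phi n τ) + (phi n τ - phi n σ₂) := by
          abel
        rw [this]
        exact add_mem hstep hrec
      · -- terminal case : disagreement set inside {a, b, u}
        push_neg at hc
        have hoff : ∀ i, i ≠ a → i ≠ b → i ≠ u → σ₁ i = σ₂ i := by
          intro i hia hib hiu
          by_contra h
          exact hiu (hc i h hia hib)
        set w := σ₁ u with hwdef
        have hwu : w ≠ u := h₁ u
        have hwb : w ≠ b := by
          intro h
          rw [← hc1] at h
          exact hua (σ₁.injective h)
        have hσ₂b : σ₂ b = w := by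
          set z := σ₁⁻¹ (σ₂ b) with hzdef
          have hz : σ₁ z = σ₂ b := Equiv.apply_symm_apply σ₁ (σ₂ b)
          have hza : z ≠ a := by
            intro h
            rw [h, hc1] at hz
            exact h₂ b hz.symm
          have hzb : z ≠ b := by
            intro h
            rw [h] at hz
            have h2' : σ₂ a = σ₂ b := by rw [← huσ₂a, hudef]; exact hz
            exact hab (σ₂.injective h2')
          have hzu : z = u := by
            by_contra hzu
            have := hoff z hza hzb hzu
            rw [this] at hz
            have : z = b := σ₂.injective hz
            exact hzb this
          rw [hzu] at hz
          rw [← hz, hwdef]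
        have hσ₂u : σ₂ u = b := by
          set z := σ₁⁻¹ (σ₂ u) with hzdef
          have hz : σ₁ z = σ₂ u := Equiv.apply_symm_apply σ₁ (σ₂ u)
          have hzb : z ≠ b := by
            intro h
            rw [h, ← hudef] at hz
            exact h₂ u hz.symm
          have hzu : z ≠ u := by
            intro h
            rw [h, ← hwdef, ← hσ₂b] at hz
            exact hub (σ₂.injective hz).symm
          have hza : z = a := by
            by_contra hza
            have := hoff z hza hzb hzu
            rw [this] at hz
            have : z = u := σ₂.injective hz
            exact hzu this
          rw [hza, hc1] at hz
          exact hz.symm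
        rw [phi_diff n σ₁ σ₂ {a, b, u} (fun i hi => by
          simp only [Finset.mem_insert, Finset.mem_singleton] at hi
          push_neg at hi
          exact hoff i hi.1 hi.2.1 hi.2.2)]
        have hnotmem : a ∉ ({b, u} : Finset (Fin n)) := by simp [hab, hua.symm]
        have hnotmem2 : b ∉ ({u} : Finset (Fin n)) := by simp [hub.symm]
        rw [Finset.sum_insert hnotmem, Finset.sum_insert hnotmem2,
          Finset.sum_singleton, hc1, ← huσ₂a, ← hudef, hσ₂b, hσ₂u, ← hwdef]
        by_cases hwa : w = a
        · have : pgen n a b - pgen n a u + (pgen n b u - pgen n b w +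
              (pgen n u w - pgen n u b)) = 0 := by
            rw [hwa, pgen_comm n b a, pgen_comm n u a, pgen_comm n u b]
            abel
          rw [this]
          exact zero_mem _
        · have hq := quad_mem n hn (a := a) (b := w) (c := b) (d := u)
            (fun h => hwa h.symm) hab hua.symm hwb hwu hub.symm
          have : pgen n a b - pgen n a u + (pgen n b u - pgen n b w +
              (pgen n u w - pgen n u b)) =
              pgen n a b + pgen n w u - pgen n a u - pgen n w b := by
            rw [pgen_comm n w u, pgen_comm n w b, pgen_comm n u b]
            abel
          rw [this]
          exact hq

/-- For `n ≥ 5`: (a) every derangement `σ` with at least two cycles admits a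
derangement `σ̄` with one fewer cycle such that `φ(σ)·φ(σ̄)⁻¹ ∈ C_n`; (b) the
images under `φ` of any two derangements lie in the same coset of `C_n`. -/
theorem stmt_12 (n : ℕ) (hn : 5 ≤ n) :
    (∀ σ : Equiv.Perm (Fin n), (∀ i, σ i ≠ i) → 2 ≤ Multiset.card σ.cycleType →
      ∃ σ' : Equiv.Perm (Fin n), (∀ i, σ' i ≠ i) ∧
        Multiset.card σ'.cycleType = Multiset.card σ.cycleType - 1 ∧
        phi n σ - phi n σ' ∈ Cgrp n) ∧
    (∀ σ₁ σ₂ : Equiv.Perm (Fin n), (∀ i, σ₁ i ≠ i) → (∀ i, σ₂ i ≠ i) →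
      phi n σ₁ - phi n σ₂ ∈ Cgrp n) := by
  have partb : ∀ σ₁ σ₂ : Equiv.Perm (Fin n), (∀ i, σ₁ i ≠ i) → (∀ i, σ₂ i ≠ i) →
      phi n σ₁ - phi n σ₂ ∈ Cgrp n :=
    fun σ₁ σ₂ h₁ h₂ => coset_aux n hn _ σ₁ σ₂ h₁ h₂ le_rfl
  refine ⟨?_, partb⟩
  intro σ hσ ht
  have hsupp : σ.support = Finset.univ :=
    Finset.eq_univ_iff_forall.mpr fun i => Equiv.Perm.mem_support.mpr (hσ i)
  have hsum : σ.cycleType.sum = n := by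
    rw [Equiv.Perm.sum_cycleType, hsupp, Finset.card_univ, Fintype.card_fin]
  obtain ⟨l₁, hl₁⟩ : ∃ l₁, l₁ ∈ σ.cycleType := by
    apply Multiset.exists_mem_of_ne_zero
    intro h
    rw [h] at ht
    simp at ht
  obtain ⟨m₁, hm⟩ : ∃ m₁, σ.cycleType = l₁ ::ₘ m₁ :=
    ⟨_, (Multiset.cons_erase hl₁).symm⟩
  obtain ⟨l₂, hl₂⟩ : ∃ l₂, l₂ ∈ m₁ := by
    apply Multiset.exists_mem_of_ne_zero
    intro h
    rw [hm, h] at ht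
    simp at ht
  obtain ⟨m₂, hm₁⟩ : ∃ m₂, m₁ = l₂ ::ₘ m₂ :=
    ⟨_, (Multiset.cons_erase hl₂).symm⟩
  have hl₁2 : 2 ≤ l₁ := Equiv.Perm.two_le_of_mem_cycleType hl₁
  have hl₂2 : 2 ≤ l₂ := Equiv.Perm.two_le_of_mem_cycleType (by rw [hm]; exact Multiset.mem_cons_of_mem hl₂)
  have hex : ∃ g : Equiv.Perm (Fin n), g.cycleType = (l₁ + l₂) ::ₘ m₂ := by
    rw [Equiv.Perm.exists_with_cycleType_iff (Fin n)]
    constructor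
    · rw [Fintype.card_fin]
      rw [hm, hm₁] at hsum
      simp only [Multiset.sum_cons] at hsum ⊢
      omega
    · intro x hx
      rcases Multiset.mem_cons.mp hx with h | h
      · omega
      · exact Equiv.Perm.two_le_of_mem_cycleType
          (by rw [hm, hm₁]; exact Multiset.mem_cons_of_mem (Multiset.mem_cons_of_mem h))
  obtain ⟨σ', hσ'⟩ := hex
  have hsum' : σ'.cycleType.sum = n := by
    rw [hσ']
    rw [hm, hm₁] at hsum
    simp only [Multiset.sum_cons] at hsum ⊢
    omega
  have hsupp' : σ'.support = Finset.univ := by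
    apply Finset.eq_univ_of_card
    rw [← Equiv.Perm.sum_cycleType, hsum', Fintype.card_fin]
  have hder' : ∀ i, σ' i ≠ i := fun i =>
    Equiv.Perm.mem_support.mp (by rw [hsupp']; exact Finset.mem_univ i)
  refine ⟨σ', hder', ?_, partb σ σ' hσ hder'⟩
  rw [hσ', hm, hm₁]
  simp
end

section
/- Let n > 2 be an odd integer with n ≡ 2 (mod 3). Then in G_n one has (∏_{1 ≤ i < j ≤ n} p_{i,j}) · (p_{1,3} p_{2,3} p_{2,4} p_{1,4})^{−1} ∈ C_n, i.e., the product of all generators p_{i,j} lies in the coset p_{1,3} p_{2,3} p_{2,4} p_{1,4} · C_n. -/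
attribute [local instance] Classical.propDecidable

noncomputable def qm (n : ℕ) : (Sym2 (Fin n) → ℤ) →+ (Sym2 (Fin n) → ℤ) ⧸ Cgrp n :=
  QuotientAddGroup.mk' (Cgrp n)

lemma qm_eq_zero {n : ℕ} {x : Sym2 (Fin n) → ℤ} (h : x ∈ Cgrp n) : qm n x = 0 := by
  exact (QuotientAddGroup.eq_zero_iff x).mpr h

lemma tri_mem {n : ℕ} {i j k : Fin n} (h1 : i ≠ j) (h2 : j ≠ k) (h3 : i ≠ k) :
    pgen n i j + pgen n j k + pgen n i k ∈ Cgrp n :=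
  AddSubgroup.subset_closure ⟨i, j, k, h1, h2, h3, rfl⟩

lemma tri {n : ℕ} {i j k : Fin n} (h1 : i ≠ j) (h2 : j ≠ k) (h3 : i ≠ k) :
    qm n (pgen n i j) + qm n (pgen n j k) + qm n (pgen n i k) = 0 := by
  rw [← map_add, ← map_add]; exact qm_eq_zero (tri_mem h1 h2 h3)

/-- vertex `k mod n` -/
def vv (n : ℕ) [NeZero n] (k : ℕ) : Fin n :=
  ⟨k % n, Nat.mod_lt _ (Nat.pos_of_ne_zero (NeZero.ne n))⟩

lemma vv_eq_iff {n : ℕ} [NeZero n] {i j : ℕ} : vv n i = vv n j ↔ i % n = j % n := by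
  simp [vv, Fin.ext_iff]

lemma vv_mod {n : ℕ} [NeZero n] (k : ℕ) : vv n (k % n) = vv n k := by
  simp [vv, Fin.ext_iff, Nat.mod_mod_of_dvd]

lemma vv_of_lt {n : ℕ} [NeZero n] {k : ℕ} (h : k < n) : vv n k = ⟨k, h⟩ := by
  simp [vv, Fin.ext_iff, Nat.mod_eq_of_lt h]

noncomputable def Ee (n : ℕ) [NeZero n] (i j : ℕ) := qm n (pgen n (vv n i) (vv n j))

lemma Ee_comm (n : ℕ) [NeZero n] (i j : ℕ) : Ee n i j = Ee n j i := by
  rw [Ee, Ee, pgen_comm]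

lemma triE {n : ℕ} [NeZero n] {i j k : ℕ} (h1 : i % n ≠ j % n) (h2 : j % n ≠ k % n)
    (h3 : i % n ≠ k % n) : Ee n i j + Ee n j k + Ee n i k = 0 :=
  tri (by simpa [vv_eq_iff] using h1) (by simpa [vv_eq_iff] using h2)
    (by simpa [vv_eq_iff] using h3)

lemma exists_fresh {n : ℕ} (hn : 5 ≤ n) (a b c : Fin n) :
    ∃ x y : Fin n, x ≠ y ∧ x ≠ a ∧ x ≠ b ∧ x ≠ c ∧ y ≠ a ∧ y ≠ b ∧ y ≠ c := by
  classical
  have hcard : ({a, b, c} : Finset (Fin n)).card ≤ 3 := by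
    apply le_trans (Finset.card_insert_le _ _)
    simp [Finset.card_insert_le]
    have := Finset.card_insert_le b ({c} : Finset (Fin n)); simp only [Finset.card_singleton] at this; omega
  have h2 : 1 < ({a, b, c} : Finset (Fin n))ᶜ.card := by
    rw [Finset.card_compl]
    simp only [Fintype.card_fin]
    omega
  obtain ⟨x, hx, y, hy, hxy⟩ := Finset.one_lt_card.mp h2
  simp only [Finset.mem_compl, Finset.mem_insert, Finset.mem_singleton, not_or] at hx hy
  exact ⟨x, y, hxy, hx.1, hx.2.1, hx.2.2, hy.1, hy.2.1, hy.2.2⟩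

/-- doubled edges with disjoint supports are equal mod C -/
lemma double_disj {n : ℕ} {a b c d : Fin n} (hab : a ≠ b) (hcd : c ≠ d)
    (hac : a ≠ c) (had : a ≠ d) (hbc : b ≠ c) (hbd : b ≠ d) :
    qm n (pgen n a b) + qm n (pgen n a b) = qm n (pgen n c d) + qm n (pgen n c d) := by
  have h1 := tri (n := n) hab hbc hac
  have h2 := tri (n := n) hab hbd had
  have h3 := tri (n := n) hac (show c ≠ d from hcd) had
  have h4 := tri (n := n) hbc hcd hbd
  have key : (qm n (pgen n a b) + qm n (pgen n b c) + qm n (pgen n a c))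
      + (qm n (pgen n a b) + qm n (pgen n b d) + qm n (pgen n a d))
      - ((qm n (pgen n a c) + qm n (pgen n c d) + qm n (pgen n a d))
      + (qm n (pgen n b c) + qm n (pgen n c d) + qm n (pgen n b d)))
      = (qm n (pgen n a b) + qm n (pgen n a b))
        - (qm n (pgen n c d) + qm n (pgen n c d)) := by abel
  rw [h1, h2, h3, h4] at key
  simp only [add_zero, zero_add, sub_zero, zero_sub, neg_eq_zero] at key
  rw [eq_comm, sub_eq_zero] at key
  exact key

/-- doubled edges sharing the vertex `a` are equal mod C (needs `5 ≤ n`). -/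
lemma double_share {n : ℕ} (hn : 5 ≤ n) {a c d : Fin n} (hac : a ≠ c) (had : a ≠ d)
    (hcd : c ≠ d) :
    qm n (pgen n a c) + qm n (pgen n a c) = qm n (pgen n a d) + qm n (pgen n a d) := by
  obtain ⟨x, y, hxy, hxa, hxc, hxd, hya, hyc, hyd⟩ := exists_fresh hn a c d
  have h1 : qm n (pgen n a c) + qm n (pgen n a c)
      = qm n (pgen n x y) + qm n (pgen n x y) :=
    double_disj hac hxy (Ne.symm hxa) (Ne.symm hya) (Ne.symm hxc) (Ne.symm hyc)
  have h2 : qm n (pgen n a d) + qm n (pgen n a d)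
      = qm n (pgen n x y) + qm n (pgen n x y) :=
    double_disj had hxy (Ne.symm hxa) (Ne.symm hya) (Ne.symm hxd) (Ne.symm hyd)
  rw [h1, h2]

lemma mod_ne {n : ℕ} {i j : ℕ} (hi : i < n) (hj : j < n) (h : i ≠ j) : i % n ≠ j % n := by
  rw [Nat.mod_eq_of_lt hi, Nat.mod_eq_of_lt hj]; exact h

lemma vv_ne {n : ℕ} [NeZero n] {i j : ℕ} (hi : i < n) (hj : j < n) (h : i ≠ j) :
    vv n i ≠ vv n j := by
  simp [vv_eq_iff, Nat.mod_eq_of_lt hi, Nat.mod_eq_of_lt hj, h]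

lemma double_Ee {n : ℕ} [NeZero n] (hn : 5 ≤ n) {k : ℕ} (h2 : 2 ≤ k) (hk : k ≤ n - 2) :
    Ee n 0 k + Ee n 0 k = Ee n 0 1 + Ee n 0 1 := by
  exact double_share hn (vv_ne (by omega) (by omega) (by omega))
    (vv_ne (by omega) (by omega) (by omega)) (vv_ne (by omega) (by omega) (by omega))

lemma b3 {n : ℕ} [NeZero n] (hn : 5 ≤ n) :
    (Ee n 0 1 + Ee n 0 1) + (Ee n 0 1 + Ee n 0 1) + (Ee n 0 1 + Ee n 0 1) = 0 := by
  have t := triE (n := n) (i := 0) (j := 1) (k := 2) (mod_ne (by omega) (by omega) (by omega))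
    (mod_ne (by omega) (by omega) (by omega)) (mod_ne (by omega) (by omega) (by omega))
  have h12 : Ee n 1 2 + Ee n 1 2 = Ee n 0 1 + Ee n 0 1 := by
    have := double_share hn (a := vv n 1) (c := vv n 2) (d := vv n 0)
      (vv_ne (by omega) (by omega) (by omega)) (vv_ne (by omega) (by omega) (by omega))
      (vv_ne (by omega) (by omega) (by omega))
    rw [Ee, Ee]
    rw [this, ← Ee, ← Ee, Ee_comm]
  have h02 : Ee n 0 2 + Ee n 0 2 = Ee n 0 1 + Ee n 0 1 :=
    double_Ee hn (by omega) (by omega)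
  have key : (Ee n 0 1 + Ee n 1 2 + Ee n 0 2) + (Ee n 0 1 + Ee n 1 2 + Ee n 0 2)
      = (Ee n 0 1 + Ee n 0 1) + (Ee n 1 2 + Ee n 1 2) + (Ee n 0 2 + Ee n 0 2) := by abel
  rw [t, add_zero, h12, h02] at key
  rw [← key]

lemma W_val {n : ℕ} [NeZero n] (hn : 5 ≤ n) (k : ℕ) (hk2 : 2 ≤ k) :
    k ≤ n - 1 →
    (∑ i ∈ Finset.range k, Ee n i (i+1)) + Ee n 0 k
      + (k - 2) • (Ee n 0 1 + Ee n 0 1) = 0 := by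
  induction k, hk2 using Nat.le_induction with
  | base =>
    intro _
    have t := triE (n := n) (i := 0) (j := 1) (k := 2) (mod_ne (by omega) (by omega) (by omega))
      (mod_ne (by omega) (by omega) (by omega)) (mod_ne (by omega) (by omega) (by omega))
    simpa [Finset.sum_range_succ, add_assoc, zero_nsmul] using t
  | succ k hk ih =>
    intro hk1
    have ih' := ih (by omega)
    have ht := triE (n := n) (i := 0) (j := k) (k := k+1)
      (mod_ne (by omega) (by omega) (by omega)) (mod_ne (by omega) (by omega) (by omega))
      (mod_ne (by omega) (by omega) (by omega))
    have hb : Ee n 0 k + Ee n 0 k = Ee n 0 1 + Ee n 0 1 := double_Ee hn hk (by omega)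
    rw [Finset.sum_range_succ, show k + 1 - 2 = (k-2)+1 from by omega, add_nsmul, one_nsmul]
    have key : (∑ i ∈ Finset.range k, Ee n i (i+1)) + Ee n k (k+1) + Ee n 0 (k+1)
        + ((k-2) • (Ee n 0 1 + Ee n 0 1) + (Ee n 0 1 + Ee n 0 1))
        = ((∑ i ∈ Finset.range k, Ee n i (i+1)) + Ee n 0 k
            + (k-2) • (Ee n 0 1 + Ee n 0 1))
          + (Ee n 0 k + Ee n k (k+1) + Ee n 0 (k+1))
          + ((Ee n 0 1 + Ee n 0 1) - (Ee n 0 k + Ee n 0 k)) := by abel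
    rw [ih', ht, hb] at key
    simp only [zero_add, add_zero, sub_self] at key
    calc _ = (∑ i ∈ Finset.range k, Ee n i (i+1)) + Ee n k (k+1) + Ee n 0 (k+1)
        + ((k-2) • (Ee n 0 1 + Ee n 0 1) + (Ee n 0 1 + Ee n 0 1)) := by abel
    _ = 0 := key

noncomputable def Cc (n : ℕ) [NeZero n] (d : ℕ) : Sym2 (Fin n) → ℤ :=
  ∑ i ∈ Finset.range n, pgen n (vv n i) (vv n (i + d))

lemma qm_Cc (n : ℕ) [NeZero n] (d : ℕ) :
    qm n (Cc n d) = ∑ i ∈ Finset.range n, Ee n i (i + d) := by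
  rw [Cc, map_sum]; rfl

lemma mod_helper1 {n : ℕ} [NeZero n] {i : ℕ} (hi : i < n) (d : ℕ) :
    ((i + d) % n + (n - d % n)) % n = i := by
  have h0 : 0 < n := Nat.pos_of_ne_zero (NeZero.ne n)
  have hd : d % n < n := Nat.mod_lt _ h0
  have hdm := Nat.div_add_mod d n
  rw [Nat.mod_add_mod]
  have hmul : n * (d / n + 1) = n * (d / n) + n := by ring
  have : i + d + (n - d % n) = i + n * (d / n + 1) := by omega
  rw [this, Nat.add_mul_mod_self_left]
  exact Nat.mod_eq_of_lt hi

lemma mod_helper2 {n : ℕ} [NeZero n] {i : ℕ} (hi : i < n) (d : ℕ) :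
    ((i + (n - d % n)) % n + d) % n = i := by
  have h0 : 0 < n := Nat.pos_of_ne_zero (NeZero.ne n)
  have hd : d % n < n := Nat.mod_lt _ h0
  have hdm := Nat.div_add_mod d n
  rw [Nat.mod_add_mod]
  have hmul : n * (d / n + 1) = n * (d / n) + n := by ring
  have : i + (n - d % n) + d = i + n * (d / n + 1) := by omega
  rw [this, Nat.add_mul_mod_self_left]
  exact Nat.mod_eq_of_lt hi

lemma sum_shift {M : Type*} [AddCommMonoid M] {n : ℕ} [NeZero n] (d : ℕ) (g : ℕ → M) :
    ∑ i ∈ Finset.range n, g ((i + d) % n) = ∑ i ∈ Finset.range n, g (i % n) := by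
  have h0 : 0 < n := Nat.pos_of_ne_zero (NeZero.ne n)
  refine Finset.sum_nbij' (fun i => (i + d) % n) (fun i => (i + (n - d % n)) % n) ?_ ?_ ?_ ?_ ?_
  · intro i hi; exact Finset.mem_range.mpr (Nat.mod_lt _ h0)
  · intro i hi; exact Finset.mem_range.mpr (Nat.mod_lt _ h0)
  · intro i hi; exact mod_helper1 (Finset.mem_range.mp hi) d
  · intro i hi; exact mod_helper2 (Finset.mem_range.mp hi) d
  · intro i hi
    rw [Nat.mod_mod_of_dvd _ dvd_rfl]

lemma Cc_shift {n : ℕ} [NeZero n] (d e : ℕ) :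
    ∑ i ∈ Finset.range n, pgen n (vv n (i + d)) (vv n (i + d + e)) = Cc n e := by
  have step1 : ∀ i : ℕ, pgen n (vv n (i + d)) (vv n (i + d + e))
      = (fun j => pgen n (vv n j) (vv n (j + e))) ((i + d) % n) := by
    intro i
    have h2 : vv n ((i + d) % n + e) = vv n (i + d + e) := by
      rw [vv_eq_iff, Nat.mod_add_mod]
    simp only []
    rw [vv_mod, h2]
  calc ∑ i ∈ Finset.range n, pgen n (vv n (i + d)) (vv n (i + d + e))
      = ∑ i ∈ Finset.range n, (fun j => pgen n (vv n j) (vv n (j + e))) ((i + d) % n) := by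
        exact Finset.sum_congr rfl (fun i _ => step1 i)
    _ = ∑ i ∈ Finset.range n, (fun j => pgen n (vv n j) (vv n (j + e))) (i % n) :=
        sum_shift (n := n) d (fun j => pgen n (vv n j) (vv n (j + e)))
    _ = Cc n e := by
        refine Finset.sum_congr rfl (fun i hi => ?_)
        simp only []
        rw [Nat.mod_eq_of_lt (Finset.mem_range.mp hi)]

lemma mod_shift_ne {n i d : ℕ} (hd1 : 1 ≤ d) (hd2 : d < n) : i % n ≠ (i + d) % n := by
  intro h
  have hm : Nat.ModEq n i (i + d) := h
  rw [Nat.modEq_iff_dvd' (Nat.le_add_right _ _)] at hm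
  simp only [Nat.add_sub_cancel_left] at hm
  exact absurd (Nat.le_of_dvd (by omega) hm) (by omega)

lemma crel {n : ℕ} [NeZero n] {d e : ℕ} (hd : 1 ≤ d) (he : 1 ≤ e) (hde : d + e ≤ n - 1) :
    qm n (Cc n d) + qm n (Cc n e) + qm n (Cc n (d + e)) = 0 := by
  have h0 : 0 < n := Nat.pos_of_ne_zero (NeZero.ne n)
  have hT : (∑ i ∈ Finset.range n, (pgen n (vv n i) (vv n (i + d))
      + pgen n (vv n (i + d)) (vv n (i + d + e))
      + pgen n (vv n i) (vv n (i + d + e)))) ∈ Cgrp n := by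
    refine AddSubgroup.sum_mem _ (fun i _ => ?_)
    have h1 : i % n ≠ (i + d) % n := mod_shift_ne hd (by omega)
    have h2 : (i + d) % n ≠ (i + d + e) % n := mod_shift_ne he (by omega)
    have h3 : i % n ≠ (i + d + e) % n := by
      have := mod_shift_ne (n := n) (i := i) (d := d + e) (by omega) (by omega)
      rwa [← Nat.add_assoc] at this
    refine tri_mem ?_ ?_ ?_ <;> rw [Ne, vv_eq_iff] <;> assumption
  have hsplit : (∑ i ∈ Finset.range n, (pgen n (vv n i) (vv n (i + d))
      + pgen n (vv n (i + d)) (vv n (i + d + e))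
      + pgen n (vv n i) (vv n (i + d + e))))
      = Cc n d + (∑ i ∈ Finset.range n, pgen n (vv n (i + d)) (vv n (i + d + e)))
        + Cc n (d + e) := by
    rw [Finset.sum_add_distrib, Finset.sum_add_distrib]
    congr 1
    rw [Cc]
    exact Finset.sum_congr rfl (fun i _ => by rw [Nat.add_assoc])
  rw [hsplit, Cc_shift] at hT
  have := qm_eq_zero hT
  rw [map_add, map_add] at this
  exact this

lemma a_plus {n : ℕ} [NeZero n] (hn : 5 ≤ n) :
    qm n (Cc n 1) + (n - 3) • (Ee n 0 1 + Ee n 0 1) = 0 := by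
  have hlast : Ee n (n-1) ((n-1)+1) = Ee n 0 (n-1) := by
    have h1 : vv n ((n-1)+1) = vv n 0 := by
      rw [vv_eq_iff, show (n-1)+1 = n from by omega, Nat.mod_self, Nat.zero_mod]
    rw [Ee, h1, ← Ee, Ee_comm]
  have hW := W_val hn (n-1) (by omega) (le_refl _)
  rw [show n - 1 - 2 = n - 3 from by omega] at hW
  have hsum : (∑ i ∈ Finset.range n, Ee n i (i+1))
      = (∑ i ∈ Finset.range (n-1), Ee n i (i+1)) + Ee n (n-1) ((n-1)+1) := by
    rw [← Finset.sum_range_succ (fun i => Ee n i (i+1)) (n-1),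
      show (n-1)+1 = n from by omega]
  rw [qm_Cc, hsum, hlast]
  exact hW

lemma b3' {n : ℕ} [NeZero n] (hn : 5 ≤ n) : (3 : ℕ) • (Ee n 0 1 + Ee n 0 1) = 0 := by
  rw [show (3:ℕ) = 2 + 1 from rfl, add_nsmul, two_nsmul, one_nsmul]
  exact b3 hn

lemma a_eq_b {n : ℕ} [NeZero n] (hn : 5 ≤ n) (hmod : n % 3 = 2) :
    qm n (Cc n 1) = Ee n 0 1 + Ee n 0 1 := by
  have h3 := b3' hn
  have hmul3 : ∀ s : ℕ, (3 * s) • (Ee n 0 1 + Ee n 0 1) = 0 := by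
    intro s
    induction s with
    | zero => rw [Nat.mul_zero, zero_nsmul]
    | succ s ih => rw [Nat.mul_succ, add_nsmul, ih, zero_add, h3]
  have h1 := a_plus hn
  obtain ⟨t, ht⟩ : ∃ t, n - 3 = 3 * t + 2 := ⟨(n-3)/3, by omega⟩
  rw [ht, add_nsmul, hmul3, zero_add, two_nsmul] at h1
  have key : qm n (Cc n 1) - (Ee n 0 1 + Ee n 0 1)
      = (qm n (Cc n 1) + ((Ee n 0 1 + Ee n 0 1) + (Ee n 0 1 + Ee n 0 1)))
        - ((Ee n 0 1 + Ee n 0 1) + (Ee n 0 1 + Ee n 0 1) + (Ee n 0 1 + Ee n 0 1)) := by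
    abel
  rw [h1, b3 hn] at key
  simp only [zero_sub, neg_zero] at key
  exact sub_eq_zero.mp key

lemma cval {n : ℕ} [NeZero n] (hn : 5 ≤ n) (hmod : n % 3 = 2) (d : ℕ) (hd : 1 ≤ d) :
    d ≤ n - 1 → qm n (Cc n d) = qm n (Cc n 1) := by
  induction d, hd using Nat.le_induction with
  | base => intro _; rfl
  | succ k hk ih =>
    intro hk1
    have hr := crel (n := n) (d := k) (e := 1) hk (le_refl _) (by omega)
    rw [ih (by omega)] at hr
    have ha3 : qm n (Cc n 1) + qm n (Cc n 1) + qm n (Cc n 1) = 0 := by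
      rw [a_eq_b hn hmod]; exact b3 hn
    have key : qm n (Cc n (k+1)) - qm n (Cc n 1)
        = (qm n (Cc n 1) + qm n (Cc n 1) + qm n (Cc n (k+1)))
          - (qm n (Cc n 1) + qm n (Cc n 1) + qm n (Cc n 1)) := by abel
    rw [hr, ha3, sub_zero] at key
    exact sub_eq_zero.mp key

lemma vv_val {n : ℕ} [NeZero n] (a : Fin n) : vv n a.val = a := by
  apply Fin.ext
  simp [vv, Nat.mod_eq_of_lt a.isLt]

lemma S_eq {n m : ℕ} [NeZero n] (hm : n = 2*m+1) (hn : 5 ≤ n) :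
    (∑ q ∈ Finset.univ.filter (fun q : Fin n × Fin n => q.1 < q.2), pgen n q.1 q.2)
      = ∑ d ∈ Finset.Icc 1 m, Cc n d := by
  have hrw : ∑ d ∈ Finset.Icc 1 m, Cc n d
      = ∑ p ∈ (Finset.Icc 1 m) ×ˢ (Finset.range n), pgen n (vv n p.2) (vv n (p.2 + p.1)) := by
    rw [Finset.sum_product]
    rfl
  rw [hrw]
  refine Finset.sum_nbij'
    (fun q : Fin n × Fin n => if q.2.val - q.1.val ≤ m
      then (q.2.val - q.1.val, q.1.val) else (n - (q.2.val - q.1.val), q.2.val))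
    (fun p : ℕ × ℕ => if p.2 + p.1 < n
      then (vv n p.2, vv n (p.2 + p.1)) else (vv n (p.2 + p.1), vv n p.2))
    ?_ ?_ ?_ ?_ ?_
  · rintro ⟨q1, q2⟩ hq
    have hlt : q1.val < q2.val := by
      have := (Finset.mem_filter.mp hq).2
      exact this
    have h1 : q1.val < n := q1.isLt
    have h2 : q2.val < n := q2.isLt
    by_cases hc : q2.val - q1.val ≤ m
    · simp only [if_pos hc, Finset.mem_product, Finset.mem_Icc, Finset.mem_range]
      omega
    · simp only [if_neg hc, Finset.mem_product, Finset.mem_Icc, Finset.mem_range]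
      omega
  · rintro ⟨d, i⟩ hp
    simp only [Finset.mem_product, Finset.mem_Icc, Finset.mem_range] at hp
    obtain ⟨⟨hd1, hd2⟩, hi⟩ := hp
    simp only [Finset.mem_filter, Finset.mem_univ, true_and]
    by_cases hc : i + d < n
    · simp only [if_pos hc]
      show vv n i < vv n (i + d)
      rw [Fin.lt_def]
      show i % n < (i + d) % n
      rw [Nat.mod_eq_of_lt (by omega), Nat.mod_eq_of_lt (by omega)]
      omega
    · simp only [if_neg hc]
      show vv n (i + d) < vv n i
      rw [Fin.lt_def]
      show (i + d) % n < i % n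
      have : (i + d) % n = i + d - n := by
        rw [Nat.mod_eq_sub_mod (by omega), Nat.mod_eq_of_lt (by omega)]
      rw [this, Nat.mod_eq_of_lt (by omega)]
      omega
  · rintro ⟨q1, q2⟩ hq
    have hlt : q1.val < q2.val := (Finset.mem_filter.mp hq).2
    have h1 : q1.val < n := q1.isLt
    have h2 : q2.val < n := q2.isLt
    by_cases hc : q2.val - q1.val ≤ m
    · simp only [if_pos hc]
      have hcc : q1.val + (q2.val - q1.val) < n := by omega
      simp only [if_pos hcc]
      have e1 : q1.val + (q2.val - q1.val) = q2.val := by omega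
      rw [e1, vv_val, vv_val]
    · simp only [if_neg hc]
      have hcc : ¬ (q2.val + (n - (q2.val - q1.val)) < n) := by omega
      simp only [if_neg hcc]
      have e1 : q2.val + (n - (q2.val - q1.val)) = n + q1.val := by omega
      rw [e1]
      have e2 : vv n (n + q1.val) = q1 := by
        rw [show vv n (n + q1.val) = vv n q1.val from by rw [vv_eq_iff, Nat.add_mod_left],
          vv_val]
      rw [e2, vv_val]
  · rintro ⟨d, i⟩ hp
    simp only [Finset.mem_product, Finset.mem_Icc, Finset.mem_range] at hp
    obtain ⟨⟨hd1, hd2⟩, hi⟩ := hp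
    by_cases hc : i + d < n
    · simp only [if_pos hc]
      have v1 : vv n i = ⟨i, hi⟩ := vv_of_lt hi
      have v2 : vv n (i + d) = ⟨i + d, hc⟩ := vv_of_lt hc
      rw [v1, v2]
      simp only []
      have : (i + d) - i = d := by omega
      rw [show (⟨i+d, hc⟩ : Fin n).val - (⟨i, hi⟩ : Fin n).val = d from by simp [this]]
      simp only [if_pos hd2]
    · simp only [if_neg hc]
      have hv : (i + d) % n = i + d - n := by
        rw [Nat.mod_eq_sub_mod (by omega), Nat.mod_eq_of_lt (by omega)]
      have v1 : vv n i = ⟨i, hi⟩ := vv_of_lt hi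
      have v2 : vv n (i + d) = ⟨i + d - n, by omega⟩ := by
        apply Fin.ext; simp [vv, hv]
      rw [v1, v2]
      simp only []
      have e1 : i - (i + d - n) = n - d := by omega
      rw [show (⟨i, hi⟩ : Fin n).val - (⟨i+d-n, by omega⟩ : Fin n).val = n - d from by simp [e1]]
      have : ¬ (n - d ≤ m) := by omega
      simp only [if_neg this]
      have : n - (n - d) = d := by omega
      rw [this]
  · rintro ⟨q1, q2⟩ hq
    have hlt : q1.val < q2.val := (Finset.mem_filter.mp hq).2
    have h1 : q1.val < n := q1.isLt
    have h2 : q2.val < n := q2.isLt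
    by_cases hc : q2.val - q1.val ≤ m
    · simp only [if_pos hc]
      have e1 : q1.val + (q2.val - q1.val) = q2.val := by omega
      show pgen n q1 q2 = pgen n (vv n q1.val) (vv n (q1.val + (q2.val - q1.val)))
      rw [e1, vv_val, vv_val]
    · simp only [if_neg hc]
      have e1 : q2.val + (n - (q2.val - q1.val)) = n + q1.val := by omega
      show pgen n q1 q2 = pgen n (vv n q2.val) (vv n (q2.val + (n - (q2.val - q1.val))))
      rw [e1, vv_val]
      have e2 : vv n (n + q1.val) = q1 := by
        rw [show vv n (n + q1.val) = vv n q1.val from by rw [vv_eq_iff, Nat.add_mod_left],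
          vv_val]
      rw [e2, pgen_comm]

lemma nsmul3 {M : Type*} [AddCommGroup M] {x : M} (h : x + x + x = 0) (s : ℕ) :
    (3 * s) • x = 0 := by
  induction s with
  | zero => rw [Nat.mul_zero, zero_nsmul]
  | succ s ih =>
    rw [Nat.mul_succ, add_nsmul, ih, zero_add,
      show (3:ℕ) = 2+1 from rfl, add_nsmul, two_nsmul, one_nsmul]
    exact h


set_option maxHeartbeats 1000000 in
/-- For odd `n > 2` with `n ≡ 2 (mod 3)`, the product of all generators
`∏_{1 ≤ i < j ≤ n} p_{i,j}` lies in the coset `p_{1,3} p_{2,3} p_{2,4} p_{1,4} · C_n`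
(written additively; `1,2,3,4` are the first four elements of `{1,…,n}`). -/
theorem stmt_14 (n : ℕ) (h2 : 2 < n) (hodd : Odd n) (hmod : n % 3 = 2) :
    (∑ q ∈ Finset.univ.filter (fun q : Fin n × Fin n => q.1 < q.2), pgen n q.1 q.2)
      - (pgen n ⟨0, by omega⟩ ⟨2, by omega⟩ + pgen n ⟨1, by omega⟩ ⟨2, by omega⟩
          + pgen n ⟨1, by omega⟩ ⟨3, by omega⟩ + pgen n ⟨0, by omega⟩ ⟨3, by omega⟩)
      ∈ Cgrp n := by
  obtain ⟨m, hm⟩ := hodd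
  haveI : NeZero n := ⟨by omega⟩
  have hn : 5 ≤ n := by omega
  have hm' : n = 2*m+1 := by omega
  have hS : qm n (∑ q ∈ Finset.univ.filter (fun q : Fin n × Fin n => q.1 < q.2),
      pgen n q.1 q.2) = m • qm n (Cc n 1) := by
    rw [S_eq hm' hn, map_sum]
    rw [Finset.sum_congr rfl (fun d hd => cval hn hmod d
      (Finset.mem_Icc.mp hd).1 (by have := (Finset.mem_Icc.mp hd).2; omega))]
    rw [Finset.sum_const, Nat.card_Icc]
    norm_num
  have hX4 : pgen n ⟨0, by omega⟩ ⟨2, by omega⟩ + pgen n ⟨1, by omega⟩ ⟨2, by omega⟩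
      + pgen n ⟨1, by omega⟩ ⟨3, by omega⟩ + pgen n ⟨0, by omega⟩ ⟨3, by omega⟩
      = pgen n (vv n 0) (vv n 2) + pgen n (vv n 1) (vv n 2)
        + pgen n (vv n 1) (vv n 3) + pgen n (vv n 0) (vv n 3) := by
    rw [vv_of_lt (show 0 < n by omega), vv_of_lt (show 1 < n by omega),
      vv_of_lt (show 2 < n by omega), vv_of_lt (show 3 < n by omega)]
  have hX : qm n (pgen n (vv n 0) (vv n 2) + pgen n (vv n 1) (vv n 2)
      + pgen n (vv n 1) (vv n 3) + pgen n (vv n 0) (vv n 3))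
      = - (Ee n 0 1 + Ee n 0 1) := by
    rw [map_add, map_add, map_add]
    have t1 := triE (n := n) (i := 0) (j := 2) (k := 1) (mod_ne (by omega) (by omega) (by omega))
      (mod_ne (by omega) (by omega) (by omega)) (mod_ne (by omega) (by omega) (by omega))
    have t2 := triE (n := n) (i := 1) (j := 3) (k := 0) (mod_ne (by omega) (by omega) (by omega))
      (mod_ne (by omega) (by omega) (by omega)) (mod_ne (by omega) (by omega) (by omega))
    rw [Ee_comm n 2 1] at t1
    rw [Ee_comm n 3 0, Ee_comm n 1 0] at t2
    have key : (Ee n 0 2 + Ee n 1 2 + Ee n 1 3 + Ee n 0 3) + (Ee n 0 1 + Ee n 0 1)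
        = (Ee n 0 2 + Ee n 1 2 + Ee n 0 1) + (Ee n 1 3 + Ee n 0 3 + Ee n 0 1) := by abel
    rw [t1, t2, add_zero] at key
    exact eq_neg_of_add_eq_zero_left key
  have main : qm n ((∑ q ∈ Finset.univ.filter (fun q : Fin n × Fin n => q.1 < q.2),
      pgen n q.1 q.2)
      - (pgen n ⟨0, by omega⟩ ⟨2, by omega⟩ + pgen n ⟨1, by omega⟩ ⟨2, by omega⟩
          + pgen n ⟨1, by omega⟩ ⟨3, by omega⟩ + pgen n ⟨0, by omega⟩ ⟨3, by omega⟩)) = 0 := by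
    rw [hX4, map_sub, hS, hX, sub_neg_eq_add]
    have hab := a_eq_b hn hmod
    rw [← hab, ← succ_nsmul]
    have h3A : qm n (Cc n 1) + qm n (Cc n 1) + qm n (Cc n 1) = 0 := by
      rw [hab]; exact b3 hn
    obtain ⟨s, hs⟩ : ∃ s, m + 1 = 3 * s := ⟨(m+1)/3, by omega⟩
    rw [hs]
    exact nsmul3 h3A s
  exact (QuotientAddGroup.eq_zero_iff _).mp main
end
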